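/- Let μ : ℕ → {0,1} be a nonempty 0-1 word. The following are equivalent: (i) Fac(μ) is inexhaustible; (ii) μ is recurrent; (iii) there exists a two-sided word ν : ℤ → {0,1} such that Fac(μ) = Fac(ν) = Fac(ν restricted to {0,1,2,…}) = Fac(ν restricted to {…,−2,−1,0}). -/

import Mathlib

/-- The set of finite factors of the infinite word `u : ℕ → A`. -/
def FacN {A : Type*} (u : ℕ → A) : Set (List A) :=
  {v | ∃ i : ℕ, v = (List.range v.length).map fun k => u (i + k)}

/-- The word `v` occurs in `μ` at position `i`. -/
def OccN {A : Type*} (μ : ℕ → A) (v : List A) (i : ℕ) : Prop :=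
  v = (List.range v.length).map fun k => μ (i + k)

/-- `μ` is recurrent: every finite factor occurs at infinitely many positions. -/
def RecurrentN {A : Type*} (μ : ℕ → A) : Prop :=
  ∀ v ∈ FacN μ, ∀ N : ℕ, ∃ i ≥ N, OccN μ v i

/-- A set of finite words, not reduced to the empty word, is inexhaustible if for every
`v ∈ C` there exists a word `w` such that `v ++ w ++ v ∈ C`. -/
def Inexh {A : Type*} (C : Set (List A)) : Prop :=
  C.Nonempty ∧ C ≠ {[]} ∧ ∀ v ∈ C, ∃ w : List A, v ++ w ++ v ∈ C

/-- The set of finite factors of the two-sided word `ν : ℤ → A` whose occurrences lie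
entirely inside the set of positions `S`. -/
def FacZOn {A : Type*} (ν : ℤ → A) (S : Set ℤ) : Set (List A) :=
  {v | ∃ i : ℤ, (∀ k : ℕ, k < v.length → i + (k : ℤ) ∈ S) ∧
      v = (List.range v.length).map fun k => ν (i + (k : ℤ))}

variable {A : Type*}

lemma occN_iff {μ : ℕ → A} {v : List A} {i : ℕ} :
    OccN μ v i ↔ ∀ k (hk : k < v.length), v[k] = μ (i + k) := by
  constructor
  · intro h k hk
    rw [List.getElem_of_eq h hk]
    simp
  · intro h
    apply List.ext_getElem (by simp)
    intro k h1 h2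
    simpa using h k h1

def wrd (μ : ℕ → A) (i n : ℕ) : List A := (List.range n).map fun k => μ (i + k)

@[simp] lemma wrd_length (μ : ℕ → A) (i n : ℕ) : (wrd μ i n).length = n := by simp [wrd]

@[simp] lemma wrd_getElem (μ : ℕ → A) (i n k : ℕ) (hk : k < (wrd μ i n).length) :
    (wrd μ i n)[k] = μ (i + k) := by simp [wrd]

lemma occ_wrd (μ : ℕ → A) (i n : ℕ) : OccN μ (wrd μ i n) i := by
  rw [occN_iff]; intro k hk; simp

lemma wrd_mem_fac (μ : ℕ → A) (i n : ℕ) : wrd μ i n ∈ FacN μ := ⟨i, occ_wrd μ i n⟩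

lemma mem_facN_iff {μ : ℕ → A} {v : List A} : v ∈ FacN μ ↔ ∃ i, OccN μ v i := Iff.rfl

-- slice: if u occurs at j in μ and v is the slice of u at offset i, then v occurs at j+i
lemma occ_slice {μ : ℕ → A} {u v : List A} {j i : ℕ}
    (hu : OccN μ u j) (hlen : i + v.length ≤ u.length)
    (hv : ∀ k (hk : k < v.length), v[k] = u[i + k]'(by omega)) :
    OccN μ v (j + i) := by
  rw [occN_iff] at hu ⊢
  intro k hk
  rw [hv k hk, hu (i + k) (by omega)]
  ring_nf

lemma occ_append {μ : ℕ → A} {u v : List A} {i : ℕ}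
    (hu : OccN μ u i) (hv : OccN μ v (i + u.length)) : OccN μ (u ++ v) i := by
  rw [occN_iff] at hu hv ⊢
  intro k hk
  simp only [List.length_append] at hk
  by_cases h : k < u.length
  · rw [List.getElem_append_left h]; exact hu k h
  · rw [List.getElem_append_right (by omega)]
    rw [hv (k - u.length) (by omega)]
    congr 1; omega

lemma inexh_iff_recurrent (μ : ℕ → A) : Inexh (FacN μ) ↔ RecurrentN μ := by
  constructor
  · rintro ⟨-, -, hstep⟩ v ⟨i, hvi⟩ N
    -- the long prefix
    set x := wrd μ 0 (N + i + v.length) with hx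
    obtain ⟨w, hw⟩ := hstep x (wrd_mem_fac μ 0 _)
    obtain ⟨j, hj⟩ := hw
    -- v occurs inside x at offset i
    refine ⟨j + (x.length + w.length + i), by simp [hx]; omega, ?_⟩
    have : OccN μ v (j + (x.length + w.length + i)) := by
      apply occ_slice hj (by simp [hx]; omega)
      intro k hk
      have h1 : x.length + w.length + i + k < (x ++ w ++ x).length := by simp [hx]; omega
      have h2 : (x ++ w ++ x)[x.length + w.length + i + k]'h1 = x[i+k]'(by simp [hx]; omega) := by
        rw [List.getElem_append_right (by simp; omega)]
        congr 1; simp; omega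
      have h3 : x[i+k]'(by simp [hx]; omega) = μ (0 + (i + k)) :=
        wrd_getElem μ 0 (N + i + v.length) (i + k) (by simp; omega)
      rw [h2, h3]
      have hvi' : OccN μ v i := hvi
      rw [occN_iff] at hvi'
      rw [hvi' k hk]
      simp
    exact this
  · intro hrec
    refine ⟨⟨[], 0, by simp⟩, ?_, ?_⟩
    · intro h
      have h1 : [μ 0] ∈ FacN μ := ⟨0, show OccN μ [μ 0] 0 by rw [occN_iff]; intro k hk; simp at hk; subst hk; simp⟩
      rw [h] at h1
      simp at h1
    · rintro v ⟨i, hvi⟩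
      obtain ⟨j, hj, hocc⟩ := hrec v ⟨i, hvi⟩ (i + v.length)
      refine ⟨wrd μ (i + v.length) (j - (i + v.length)), ?_⟩
      refine ⟨i, ?_⟩
      apply occ_append
      · apply occ_append hvi
        have := occ_wrd μ (i + v.length) (j - (i + v.length))
        convert this using 2
      · have : i + (v ++ wrd μ (i + v.length) (j - (i + v.length))).length = j := by
          simp; omega
        rw [this]; exact hocc

lemma occ_wrd_prefix {μ : ℕ → A} {L j : ℕ} (h : OccN μ (wrd μ 0 L) j) :
    ∀ k < L, μ (j + k) = μ k := by
  rw [occN_iff] at h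
  intro k hk
  have := h k (by simpa using hk)
  rw [wrd_getElem] at this
  simpa using this.symm

noncomputable def seqCM (μ : ℕ → A) (hrec : RecurrentN μ) : ℕ → ℕ × ℕ
  | 0 => (0, 1)
  | n+1 =>
    let c := (seqCM μ hrec n).1
    let m := (seqCM μ hrec n).2
    let j := (hrec (wrd μ 0 (m + n + 1)) (wrd_mem_fac μ 0 _) 1).choose
    let p := (hrec (wrd μ 0 (n + 1)) (wrd_mem_fac μ 0 _) (j + c)).choose
    (j + c, j + m + p + n + n + 4)

lemma seqCM_step (μ : ℕ → A) (hrec : RecurrentN μ) (n : ℕ) :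
    ∃ j p : ℕ, 1 ≤ j ∧
      (∀ k < (seqCM μ hrec n).2 + n + 1, μ (j + k) = μ k) ∧
      j + (seqCM μ hrec n).1 ≤ p ∧
      (∀ k ≤ n, μ (p + k) = μ k) ∧
      seqCM μ hrec (n+1) = (j + (seqCM μ hrec n).1, j + (seqCM μ hrec n).2 + p + n + n + 4) := by
  set c := (seqCM μ hrec n).1
  set m := (seqCM μ hrec n).2
  obtain ⟨hj1, hj2⟩ := (hrec (wrd μ 0 (m + n + 1)) (wrd_mem_fac μ 0 _) 1).choose_spec
  set j := (hrec (wrd μ 0 (m + n + 1)) (wrd_mem_fac μ 0 _) 1).choose with hjdef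
  obtain ⟨hp1, hp2⟩ := (hrec (wrd μ 0 (n + 1)) (wrd_mem_fac μ 0 _) (j + c)).choose_spec
  set p := (hrec (wrd μ 0 (n + 1)) (wrd_mem_fac μ 0 _) (j + c)).choose with hpdef
  refine ⟨j, p, hj1, ?_, hp1, ?_, ?_⟩
  · exact occ_wrd_prefix hj2
  · intro k hk; exact occ_wrd_prefix hp2 k (by omega)
  · show seqCM μ hrec (n+1) = _
    rw [seqCM]

lemma exists_cm {μ : ℕ → A} (hrec : RecurrentN μ) :
    ∃ c m : ℕ → ℕ,
      (∀ n, n ≤ c n) ∧ (∀ n, c n + n + 1 ≤ m n) ∧ (∀ n, c n ≤ c (n+1)) ∧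
      (∀ n, m n + c (n+1) ≤ m (n+1) + c n) ∧
      (∀ n k, k < m n → μ ((c (n+1) - c n) + k) = μ k) ∧
      (∀ n, ∃ p, c (n+1) ≤ p ∧ p + n + 1 ≤ m (n+1) ∧ ∀ k ≤ n, μ (p + k) = μ k) := by
  set c : ℕ → ℕ := fun n => (seqCM μ hrec n).1 with hc
  set m : ℕ → ℕ := fun n => (seqCM μ hrec n).2 with hm
  have hc0 : c 0 = 0 := by simp [hc, seqCM]
  have hm0 : m 0 = 1 := by simp [hm, seqCM]
  have hstep : ∀ n, ∃ j p, 1 ≤ j ∧ (∀ k < m n + n + 1, μ (j + k) = μ k) ∧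
      j + c n ≤ p ∧ (∀ k ≤ n, μ (p + k) = μ k) ∧
      c (n+1) = j + c n ∧ m (n+1) = j + m n + p + n + n + 4 := by
    intro n
    obtain ⟨j, p, h1, h2, h3, h4, heq⟩ := seqCM_step μ hrec n
    exact ⟨j, p, h1, h2, h3, h4, by simp only [hc, heq], by simp only [hm, heq]⟩
  have hcn : ∀ n, n ≤ c n := by
    intro n
    induction n with
    | zero => omega
    | succ n ih =>
      obtain ⟨j, p, h1, _, _, _, e1, e2⟩ := hstep n
      omega
  have hmc : ∀ n, c n + n + 1 ≤ m n := by
    intro n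
    induction n with
    | zero => omega
    | succ n ih =>
      obtain ⟨j, p, h1, _, h3, _, e1, e2⟩ := hstep n
      omega
  refine ⟨c, m, hcn, hmc, ?_, ?_, ?_, ?_⟩
  · intro n
    obtain ⟨j, p, h1, _, _, _, e1, e2⟩ := hstep n
    omega
  · intro n
    obtain ⟨j, p, h1, _, _, _, e1, e2⟩ := hstep n
    omega
  · intro n k hk
    obtain ⟨j, p, h1, h2, _, _, e1, e2⟩ := hstep n
    have hj : c (n+1) - c n = j := by omega
    rw [hj]
    exact h2 k (by omega)
  · intro n
    obtain ⟨j, p, h1, _, h3, h4, e1, e2⟩ := hstep n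
    exact ⟨p, by omega, by omega, h4⟩

lemma facZOn_norm (ν : ℤ → A) (i : ℤ) (n : ℕ) :
    ((List.range n).map fun k => ν (i + (k : ℤ))) =
      (List.range n).map (fun (k : ℕ) => ν (i + (k : ℤ))) := by
  simp only [List.bind_eq_flatMap, List.pure_def]
  rw [← List.map_eq_flatMap, List.map_map]
  rfl

lemma mem_facZOn_iff {ν : ℤ → A} {S : Set ℤ} {v : List A} :
    v ∈ FacZOn ν S ↔ ∃ i : ℤ, (∀ k : ℕ, k < v.length → i + (k : ℤ) ∈ S) ∧
      ∀ k (hk : k < v.length), v[k] = ν (i + (k : ℤ)) := by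
  constructor
  · rintro ⟨i, hS, hval⟩
    rw [facZOn_norm] at hval
    refine ⟨i, hS, fun k hk => ?_⟩
    rw [List.getElem_of_eq hval hk]
    simp only [List.getElem_map, List.getElem_range]
  · rintro ⟨i, hS, hval⟩
    refine ⟨i, hS, ?_⟩
    rw [facZOn_norm]
    apply List.ext_getElem (by simp only [List.length_map, List.length_range])
    intro k h1 h2
    simp only [List.getElem_map, List.getElem_range]
    exact hval k h1

lemma lemA {μ : ℕ → A} {c m : ℕ → ℕ}
    (hmc : ∀ n, c n + n + 1 ≤ m n) (hmono_c : ∀ n, c n ≤ c (n+1))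
    (hmono : ∀ n, m n + c (n+1) ≤ m (n+1) + c n)
    (hcons : ∀ n k, k < m n → μ ((c (n+1) - c n) + k) = μ k) :
    ∀ n n', n ≤ n' → ∀ t, t < m n → μ ((c n' - c n) + t) = μ t := by
  have hc_mono : ∀ a b : ℕ, a ≤ b → c a ≤ c b :=
    fun a b h => monotone_nat_of_le_succ hmono_c h
  have hf : ∀ a b : ℕ, a ≤ b → m a + c b ≤ m b + c a := by
    intro a b h
    induction b, h using Nat.le_induction with
    | base => omega
    | succ b hb ih =>
      have h1 := hmono b
      have h2 := hc_mono b (b+1) (by omega)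
      omega
  intro n n' h t ht
  induction n', h using Nat.le_induction with
  | base => rw [Nat.sub_self]; simp
  | succ n' hn ih =>
    have h1 : c n ≤ c n' := hc_mono _ _ hn
    have h2 : c n' ≤ c (n'+1) := hmono_c n'
    have h3 : m n + c n' ≤ m n' + c n := hf _ _ hn
    have key : c (n'+1) - c n + t = (c (n'+1) - c n') + ((c n' - c n) + t) := by omega
    rw [key, hcons n' ((c n' - c n) + t) (by omega), ih]

lemma recurrent_exists_nu {μ : ℕ → A} (hrec : RecurrentN μ) :
    ∃ ν : ℤ → A,
      FacN μ = FacZOn ν Set.univ ∧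
      FacN μ = FacZOn ν {z : ℤ | 0 ≤ z} ∧
      FacN μ = FacZOn ν {z : ℤ | z ≤ 0} := by
  obtain ⟨c, m, hcn, hmc, hmono_c, hmono, hcons, hpref⟩ := exists_cm hrec
  have hA := lemA hmc hmono_c hmono hcons
  have hc_mono : ∀ a b : ℕ, a ≤ b → c a ≤ c b :=
    fun a b h => monotone_nat_of_le_succ hmono_c h
  set ν : ℤ → A := fun z => μ ((c z.natAbs : ℤ) + z).toNat with hν
  have hB : ∀ (n : ℕ) (z : ℤ), 0 ≤ (c n : ℤ) + z → (c n : ℤ) + z < (m n : ℤ) →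
      ν z = μ ((c n : ℤ) + z).toNat := by
    intro n z h0 h1
    set a := z.natAbs with ha
    set M := max n a with hM
    have key : ∀ n' : ℕ, n' ≤ M → 0 ≤ (c n' : ℤ) + z → (c n' : ℤ) + z < (m n' : ℤ) →
        μ (((c M : ℤ) + z).toNat) = μ (((c n' : ℤ) + z).toNat) := by
      intro n' hle h0' h1'
      have hcle : c n' ≤ c M := hc_mono _ _ hle
      have ht : ((c M : ℤ) + z).toNat = (c M - c n') + ((c n' : ℤ) + z).toNat := by omega
      rw [ht]
      exact hA n' M hle _ (by omega)
    have ha0 : 0 ≤ (c a : ℤ) + z := by have := hcn a; omega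
    have ha1 : (c a : ℤ) + z < (m a : ℤ) := by have := hcn a; have := hmc a; omega
    have e1 := key a (le_max_right n a) ha0 ha1
    have e2 := key n (le_max_left n a) h0 h1
    have e0 : ν z = μ (((c a : ℤ) + z).toNat) := rfl
    rw [e0, ← e1, e2]
  have hsub : ∀ S : Set ℤ, FacZOn ν S ⊆ FacN μ := by
    intro S v hv
    rw [mem_facZOn_iff] at hv
    obtain ⟨i, -, hval⟩ := hv
    set n := i.natAbs + v.length with hn
    have h0 : 0 ≤ (c n : ℤ) + i := by have := hcn n; omega
    refine ⟨((c n : ℤ) + i).toNat, ?_⟩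
    show OccN μ v (((c n : ℤ) + i).toNat)
    rw [occN_iff]
    intro k hk
    rw [hval k hk]
    have hb0 : 0 ≤ (c n : ℤ) + (i + k) := by omega
    have hb1 : (c n : ℤ) + (i + k) < m n := by have := hcn n; have := hmc n; omega
    rw [hB n (i + k) hb0 hb1]
    congr 1
    omega
  have hsub1 : FacN μ ⊆ FacZOn ν {z : ℤ | z ≤ 0} := by
    rintro v ⟨i, hvi⟩
    have hvi' : ∀ k (hk : k < v.length), v[k] = μ (i + k) := occN_iff.mp hvi
    set n := i + v.length with hn
    rw [mem_facZOn_iff]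
    refine ⟨(i : ℤ) - c n, ?_, ?_⟩
    · intro k hk
      simp only [Set.mem_setOf_eq]
      have := hcn n
      omega
    · intro k hk
      have hb0 : 0 ≤ (c n : ℤ) + ((i : ℤ) - c n + k) := by omega
      have hb1 : (c n : ℤ) + ((i : ℤ) - c n + k) < m n := by
        have := hcn n; have := hmc n; omega
      rw [hB n _ hb0 hb1, hvi' k hk]
      congr 1
      omega
  have hsub2 : FacN μ ⊆ FacZOn ν {z : ℤ | 0 ≤ z} := by
    rintro v ⟨i, hvi⟩
    have hvi' : ∀ k (hk : k < v.length), v[k] = μ (i + k) := occN_iff.mp hvi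
    obtain ⟨p, hp1, hp2, hp3⟩ := hpref (i + v.length)
    set n := i + v.length with hn
    rw [mem_facZOn_iff]
    refine ⟨(p : ℤ) - c (n+1) + i, ?_, ?_⟩
    · intro k hk
      simp only [Set.mem_setOf_eq]
      omega
    · intro k hk
      have hb0 : 0 ≤ (c (n+1) : ℤ) + ((p : ℤ) - c (n+1) + i + k) := by omega
      have hb1 : (c (n+1) : ℤ) + ((p : ℤ) - c (n+1) + i + k) < m (n+1) := by omega
      rw [hB (n+1) _ hb0 hb1]
      have e : ((c (n+1) : ℤ) + ((p : ℤ) - c (n+1) + i + k)).toNat = p + (i + k) := by omega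
      rw [e, hp3 (i + k) (by omega), hvi' k hk]
  have hmono_S : ∀ S T : Set ℤ, S ⊆ T → FacZOn ν S ⊆ FacZOn ν T := by
    rintro S T hST v ⟨i, h1, h2⟩
    exact ⟨i, fun k hk => hST (h1 k hk), h2⟩
  refine ⟨ν, ?_, ?_, ?_⟩
  · exact Set.Subset.antisymm (hsub1.trans (hmono_S _ _ (by simp))) (hsub _)
  · exact Set.Subset.antisymm hsub2 (hsub _)
  · exact Set.Subset.antisymm hsub1 (hsub _)

lemma exists_nu_recurrent {μ : ℕ → A} {ν : ℤ → A}
    (h3 : FacN μ = FacZOn ν {z : ℤ | z ≤ 0}) : RecurrentN μ := by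
  intro v hv N
  rcases Nat.eq_zero_or_pos v.length with hlen | hlen
  · have hv0 : v = [] := List.eq_nil_of_length_eq_zero hlen
    subst hv0
    exact ⟨N, le_refl N, by simp [OccN]⟩
  · rw [h3, mem_facZOn_iff] at hv
    obtain ⟨i, hS, hval⟩ := hv
    set W : List A := (List.range (N + v.length)).map (fun (k : ℕ) => ν ((i - N) + (k : ℤ)))
      with hW
    have hWlen : W.length = N + v.length := by simp [hW]
    have hWmem : W ∈ FacZOn ν {z : ℤ | z ≤ 0} := by
      rw [mem_facZOn_iff]
      refine ⟨i - N, ?_, ?_⟩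
      · intro k hk
        simp only [Set.mem_setOf_eq]
        have hlast := hS (v.length - 1) (by omega)
        simp only [Set.mem_setOf_eq] at hlast
        rw [hWlen] at hk
        omega
      · intro k hk
        simp only [hW, List.getElem_map, List.getElem_range]
    rw [← h3] at hWmem
    obtain ⟨q, hq⟩ := hWmem
    refine ⟨q + N, by omega, ?_⟩
    apply occ_slice hq (by rw [hWlen])
    intro k hk
    have he : W[N + k]'(by rw [hWlen]; omega) = ν ((i - N) + ((N + k : ℕ) : ℤ)) := by
      simp only [hW, List.getElem_map, List.getElem_range]
    rw [he, hval k hk]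
    congr 1
    push_cast
    ring

theorem stmt4 (μ : ℕ → Bool) :
    (Inexh (FacN μ) ↔ RecurrentN μ) ∧
    (RecurrentN μ ↔ ∃ ν : ℤ → Bool,
      FacN μ = FacZOn ν Set.univ ∧
      FacN μ = FacZOn ν {z : ℤ | 0 ≤ z} ∧
      FacN μ = FacZOn ν {z : ℤ | z ≤ 0}) := by
  refine ⟨inexh_iff_recurrent μ, ?_, ?_⟩
  · exact fun hrec => recurrent_exists_nu hrec
  · rintro ⟨ν, -, -, h3⟩
    exact exists_nu_recurrent h3
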